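/- arXiv:2001.03188 — 8 statements merged into one kernel-verified Lean document; each statement's English description precedes it below -/
import Mathlib

section
/- Let n be a natural number with n ≥ 2. There exists an n-generated lattice that has no atom if and only if n ≥ 3. -/
set_option linter.unreachableTactic false
set_option linter.unusedTactic false

/-- A set has exactly two elements. -/
def TwoElem {α : Type*} (s : Set α) : Prop := ∃ x y : α, x ≠ y ∧ s = {x, y}

/-- `a` is an atom of the lattice `L`: the principal ideal `↓a` has exactly two elements. -/
def IsAtomOf {L : Type*} [Lattice L] (a : L) : Prop := TwoElem (Set.Iic a)

/-- `G` generates the lattice `L`: `G` is contained in no proper sublattice, that is,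
the sublattice generated by `G` is all of `L`. -/
def GeneratesLat {L : Type*} [Lattice L] (G : Set L) : Prop :=
  latticeClosure G = Set.univ

namespace SpiralAux

/-- The three-strand descending spiral lattice: bottom `m`, three descending strands
`w j` (strand = `j % 3`, larger index is lower), and a descending chain `t k` on top. -/
inductive Sp : Type
  | m : Sp
  | w : ℕ → Sp
  | t : ℕ → Sp

namespace Sp

def le : Sp → Sp → Prop
  | .m, _ => True
  | .w i, .w j => j ≤ i ∧ i % 3 = j % 3
  | .w i, .t j => j ≤ i
  | .t i, .t j => j ≤ i
  | _, _ => False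

/-- the least `j ≥ k` with `j ≡ i (mod 3)` (or `i` itself if `k ≤ i`). -/
def jump (i k : ℕ) : ℕ := if k ≤ i then i else k + (i % 3 + 3 - k % 3) % 3

def sup : Sp → Sp → Sp
  | .m, x => x
  | x, .m => x
  | .w i, .w j => if i % 3 = j % 3 then .w (min i j) else .t (min i j)
  | .w i, .t j => .t (min i j)
  | .t i, .w j => .t (min i j)
  | .t i, .t j => .t (min i j)

def inf : Sp → Sp → Sp
  | .m, _ => .m
  | _, .m => .m
  | .w i, .w j => if i % 3 = j % 3 then .w (max i j) else .m
  | .w i, .t j => .w (jump i j)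
  | .t i, .w j => .w (jump j i)
  | .t i, .t j => .t (max i j)

set_option linter.unnecessarySeqFocus false in
instance instLattice : Lattice Sp where
  le := le
  le_refl a := by cases a <;> simp [le]
  le_trans a b c hab hbc := by
    cases a <;> cases b <;> cases c <;>
      first
        | trivial
        | exact hab.elim
        | exact hbc.elim
        | (simp only [le] at hab hbc ⊢; omega)
  le_antisymm a b hab hba := by
    cases a <;> cases b <;>
      first
        | trivial
        | exact hab.elim
        | exact hba.elim
        | (simp only [le] at hab hba; simp only [Sp.w.injEq, Sp.t.injEq]; omega)
  sup := sup
  le_sup_left a b := by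
    cases a <;> cases b <;> simp only [sup] <;> (try split_ifs) <;>
      first | trivial | (simp only [le]; omega)
  le_sup_right a b := by
    cases a <;> cases b <;> simp only [sup] <;> (try split_ifs) <;>
      first | trivial | (simp only [le]; omega)
  sup_le a b c hac hbc := by
    cases a <;> cases b <;> cases c <;> simp only [sup] <;> (try split_ifs) <;>
      first
        | trivial
        | exact hac.elim
        | exact hbc.elim
        | (simp only [le] at hac hbc ⊢ <;> omega)
  inf := inf
  inf_le_left a b := by
    cases a <;> cases b <;> simp only [inf, jump] <;> (try split_ifs) <;>
      first | trivial | (simp only [le]; omega)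
  inf_le_right a b := by
    cases a <;> cases b <;> simp only [inf, jump] <;> (try split_ifs) <;>
      first | trivial | (simp only [le]; omega)
  le_inf a b c hab hac := by
    cases a <;> cases b <;> cases c <;> simp only [inf, jump] <;> (try split_ifs) <;>
      first
        | trivial
        | exact hab.elim
        | exact hac.elim
        | (simp only [le] at hab hac ⊢ <;> omega)

lemma sup_w_w (i j : ℕ) (h : i % 3 ≠ j % 3) : (w i : Sp) ⊔ w j = t (min i j) := by
  show sup (w i) (w j) = t (min i j)
  simp [sup, h]

lemma inf_w_w (i j : ℕ) (h : i % 3 ≠ j % 3) : (w i : Sp) ⊓ w j = m := by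
  show inf (w i) (w j) = m
  simp [inf, h]

lemma inf_w_t (i k : ℕ) : (w i : Sp) ⊓ t k = w (jump i k) := rfl

/-- if a set contains three distinct elements, it does not have exactly two elements -/
lemma not_twoElem_of_three {α : Type*} {s : Set α} {p q r : α}
    (hp : p ∈ s) (hq : q ∈ s) (hr : r ∈ s)
    (h1 : p ≠ q) (h2 : p ≠ r) (h3 : q ≠ r) : ¬ TwoElem s := by
  rintro ⟨x, y, hxy, rfl⟩
  simp only [Set.mem_insert_iff, Set.mem_singleton_iff] at hp hq hr
  rcases hp with rfl | rfl <;> rcases hq with rfl | rfl <;> rcases hr with rfl | rfl <;>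
    simp_all

lemma noAtom : ∀ a : Sp, ¬ IsAtomOf a := by
  intro a
  cases a with
  | m =>
    rintro ⟨x, y, hxy, hs⟩
    have hx : x ∈ Set.Iic (m : Sp) := by rw [hs]; exact Set.mem_insert _ _
    have hy : y ∈ Set.Iic (m : Sp) := by
      rw [hs]; exact Set.mem_insert_iff.mpr (Or.inr rfl)
    have hx' : x ≤ m := hx
    have hy' : y ≤ m := hy
    have hxm : x = m := by cases x with
      | m => rfl
      | w i => exact hx'.elim
      | t i => exact hx'.elim
    have hym : y = m := by cases y with
      | m => rfl
      | w i => exact hy'.elim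
      | t i => exact hy'.elim
    exact hxy (hxm.trans hym.symm)
  | w i =>
    apply not_twoElem_of_three (p := m) (q := w (i + 3)) (r := w i)
    · exact Set.mem_Iic.mpr trivial
    · exact Set.mem_Iic.mpr (show le (w (i+3)) (w i) from ⟨by omega, by omega⟩)
    · exact Set.mem_Iic.mpr le_rfl
    · intro h; exact Sp.noConfusion h
    · intro h; exact Sp.noConfusion h
    · intro h; rw [Sp.w.injEq] at h; omega
  | t k =>
    apply not_twoElem_of_three (p := m) (q := w k) (r := t k)
    · exact Set.mem_Iic.mpr trivial
    · exact Set.mem_Iic.mpr (show le (w k) (t k) from le_rfl)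
    · exact Set.mem_Iic.mpr le_rfl
    · intro h; exact Sp.noConfusion h
    · intro h; exact Sp.noConfusion h
    · intro h; exact Sp.noConfusion h

/-- the three generators -/
def S3 : Set Sp := {w 0, w 1, w 2}

lemma wmem : ∀ nn : ℕ, w nn ∈ latticeClosure S3 := by
  intro nn
  induction nn using Nat.strong_induction_on with
  | _ n ih =>
    by_cases hn : n < 3
    · apply subset_latticeClosure
      interval_cases n
      · exact Set.mem_insert _ _
      · exact Set.mem_insert_iff.mpr (Or.inr (Set.mem_insert _ _))
      · exact Set.mem_insert_iff.mpr (Or.inr (Set.mem_insert_iff.mpr (Or.inr rfl)))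
    · push_neg at hn
      have h1 : w (n - 3) ∈ latticeClosure S3 := ih _ (by omega)
      have h2 : w (n - 2) ∈ latticeClosure S3 := ih _ (by omega)
      have h3 : w (n - 1) ∈ latticeClosure S3 := ih _ (by omega)
      have ht : t (n - 2) ∈ latticeClosure S3 := by
        have hsup := (isSublattice_latticeClosure (s := S3)).supClosed h2 h3
        rwa [sup_w_w _ _ (by omega), show min (n-2) (n-1) = n - 2 by omega] at hsup
      have hinf := (isSublattice_latticeClosure (s := S3)).infClosed h1 ht
      rwa [inf_w_t, show jump (n-3) (n-2) = n by unfold jump; split <;> omega] at hinf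

lemma tmem (k : ℕ) : t k ∈ latticeClosure S3 := by
  have hsup := (isSublattice_latticeClosure (s := S3)).supClosed (wmem k) (wmem (k + 1))
  rwa [sup_w_w _ _ (by omega), show min k (k+1) = k by omega] at hsup

lemma mmem : m ∈ latticeClosure S3 := by
  have hinf := (isSublattice_latticeClosure (s := S3)).infClosed (wmem 0) (wmem 1)
  rwa [inf_w_w 0 1 (by omega)] at hinf

lemma genAll : latticeClosure S3 = Set.univ := by
  apply Set.eq_univ_of_forall
  intro x
  cases x with
  | m => exact mmem
  | w i => exact wmem i
  | t k => exact tmem k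

end Sp
end SpiralAux

open SpiralAux

/-- In any lattice, `{a, b, a ⊓ b, a ⊔ b}` is a sublattice. -/
lemma pair_isSublattice {L : Type*} [Lattice L] (a b : L) :
    IsSublattice ({a, b, a ⊓ b, a ⊔ b} : Set L) := by
  constructor <;>
  · rintro x hx y hy
    simp only [Set.mem_insert_iff, Set.mem_singleton_iff] at hx hy ⊢
    rcases hx with rfl | rfl | rfl | rfl <;> rcases hy with rfl | rfl | rfl | rfl <;>
      simp [sup_idem, inf_idem, sup_left_idem, sup_right_idem, inf_left_idem, inf_right_idem,
        sup_inf_self, inf_sup_self, sup_comm, inf_comm, sup_eq_left, sup_eq_right,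
        inf_eq_left, inf_eq_right, le_sup_left, le_sup_right, inf_le_left, inf_le_right,
        sup_assoc, inf_assoc, sup_left_comm, inf_left_comm]

theorem stmt_2 (n : ℕ) (hn : 2 ≤ n) :
    (∃ (L : Type) (_ : Lattice L) (G : Set L),
        G.ncard = n ∧ GeneratesLat G ∧
        (∀ a : L, ¬ IsAtomOf a)) ↔ 3 ≤ n := by
  constructor
  · rintro ⟨L, _, G, hcard, hgen, hatom⟩
    by_contra h
    have hn2 : n = 2 := by omega
    subst hn2
    obtain ⟨a, b, hab, rfl⟩ := Set.ncard_eq_two.mp hcard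
    have hK : ∀ x : L, x ∈ ({a, b, a ⊓ b, a ⊔ b} : Set L) := by
      intro x
      have hsub : latticeClosure ({a, b} : Set L) ⊆ {a, b, a ⊓ b, a ⊔ b} := by
        apply latticeClosure_min _ (pair_isSublattice a b)
        intro y hy
        rcases hy with rfl | hy
        · exact Set.mem_insert _ _
        · rw [Set.mem_singleton_iff] at hy
          subst hy
          exact Set.mem_insert_iff.mpr (Or.inr (Set.mem_insert _ _))
      apply hsub
      rw [hgen]
      trivial
    by_cases hab1 : a ≤ b
    · apply hatom b
      refine ⟨a, b, hab, ?_⟩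
      ext x
      simp only [Set.mem_Iic, Set.mem_insert_iff, Set.mem_singleton_iff]
      constructor
      · intro hx
        rcases hK x with rfl | rfl | hx' | hx'
        · exact Or.inl rfl
        · exact Or.inr rfl
        · exact Or.inl (by rw [hx', inf_eq_left.mpr hab1])
        · exact Or.inr (by rw [hx', sup_eq_right.mpr hab1])
      · rintro (rfl | rfl)
        · exact hab1
        · exact le_rfl
    · by_cases hba : b ≤ a
      · apply hatom a
        refine ⟨b, a, hab.symm, ?_⟩
        ext x
        simp only [Set.mem_Iic, Set.mem_insert_iff, Set.mem_singleton_iff]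
        constructor
        · intro hx
          rcases hK x with rfl | rfl | hx' | hx'
          · exact Or.inr rfl
          · exact Or.inl rfl
          · exact Or.inl (by rw [hx', inf_eq_right.mpr hba])
          · exact Or.inr (by rw [hx', sup_eq_left.mpr hba])
        · rintro (rfl | rfl)
          · exact hba
          · exact le_rfl
      · apply hatom a
        refine ⟨a ⊓ b, a, fun hc => hab1 (inf_eq_left.mp hc), ?_⟩
        ext x
        simp only [Set.mem_Iic, Set.mem_insert_iff, Set.mem_singleton_iff]
        constructor
        · intro hx
          rcases hK x with rfl | rfl | hx' | hx'
          · exact Or.inr rfl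
          · exact absurd hx hba
          · exact Or.inl hx'
          · exact absurd (le_trans le_sup_right (hx' ▸ hx)) hba
        · rintro (rfl | rfl)
          · exact inf_le_left
          · exact le_rfl
  · intro h3
    refine ⟨Sp, inferInstance, Set.range (fun i : Fin n =>
      if (i : ℕ) < 3 then Sp.w i else Sp.t ((i : ℕ) - 3)), ?_, ?_, ?_⟩
    · have ginj : Function.Injective (fun i : Fin n =>
          if (i : ℕ) < 3 then Sp.w i else Sp.t ((i : ℕ) - 3)) := by
        intro i j hij
        simp only at hij
        split_ifs at hij with h1 h2 <;>
          first
            | (rw [Sp.w.injEq] at hij; exact Fin.ext (by omega))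
            | (rw [Sp.t.injEq] at hij; exact Fin.ext (by omega))
            | exact Sp.noConfusion hij
      rw [← Set.image_univ, Set.ncard_image_of_injective _ ginj, Set.ncard_univ,
        Nat.card_eq_fintype_card, Fintype.card_fin]
    · unfold GeneratesLat
      apply Set.eq_univ_of_univ_subset
      rw [← Sp.genAll]
      apply latticeClosure_mono
      intro x hx
      rcases hx with rfl | rfl | hx
      · exact ⟨⟨0, by omega⟩, by norm_num⟩
      · exact ⟨⟨1, by omega⟩, by norm_num⟩
      · rw [Set.mem_singleton_iff] at hx
        subst hx
        exact ⟨⟨2, by omega⟩, by norm_num⟩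
    · exact Sp.noAtom
end

section
/- If a lattice L is generated by a three-element subset {a₀, a₁, a₂} and L has no coatom, then L has at least one atom. -/
/-- `a` is a coatom of the lattice `L`: the principal filter `↑a` has exactly two elements. -/
def IsCoatomOf {L : Type*} [Lattice L] (a : L) : Prop := TwoElem (Set.Ici a)

section aux
variable {L : Type*} [Lattice L]

lemma auxQ (u v w : L) :
    latticeClosure {u, v, w} ⊆ {x : L | x ≤ u ⊔ v ∨ w ≤ x} := by
  apply latticeClosure_min
  · rintro x (rfl | rfl | rfl)
    · exact Or.inl le_sup_left
    · exact Or.inl le_sup_right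
    · exact Or.inr le_rfl
  · constructor
    · rintro x (hx | hx) y (hy | hy)
      · exact Or.inl (sup_le hx hy)
      · exact Or.inr (hy.trans le_sup_right)
      · exact Or.inr (hx.trans le_sup_left)
      · exact Or.inr (hx.trans le_sup_left)
    · rintro x (hx | hx) y (hy | hy)
      · exact Or.inl (inf_le_left.trans hx)
      · exact Or.inl (inf_le_left.trans hx)
      · exact Or.inl (inf_le_right.trans hy)
      · exact Or.inr (le_inf hx hy)

lemma auxQ' (u v w : L) :
    latticeClosure {u, v, w} ⊆ {x : L | u ⊓ v ≤ x ∨ x ≤ w} := by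
  apply latticeClosure_min
  · rintro x (rfl | rfl | rfl)
    · exact Or.inl inf_le_left
    · exact Or.inl inf_le_right
    · exact Or.inr le_rfl
  · constructor
    · rintro x (hx | hx) y (hy | hy)
      · exact Or.inl (hx.trans le_sup_left)
      · exact Or.inl (hx.trans le_sup_left)
      · exact Or.inl (hy.trans le_sup_right)
      · exact Or.inr (sup_le hx hy)
    · rintro x (hx | hx) y (hy | hy)
      · exact Or.inl (le_inf hx hy)
      · exact Or.inr (inf_le_right.trans hy)
      · exact Or.inr (inf_le_left.trans hx)
      · exact Or.inr (inf_le_left.trans hx)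

lemma auxTop (u v w : L) :
    latticeClosure {u, v, w} ⊆ {x : L | x ≤ u ⊔ v ⊔ w} := by
  apply latticeClosure_min
  · rintro x (rfl | rfl | rfl)
    · exact le_sup_left.trans le_sup_left
    · exact le_sup_right.trans le_sup_left
    · exact le_sup_right
  · exact ⟨fun x hx y hy => sup_le hx hy, fun x hx y _ => inf_le_left.trans hx⟩

lemma auxBot (u v w : L) :
    latticeClosure {u, v, w} ⊆ {x : L | u ⊓ v ⊓ w ≤ x} := by
  apply latticeClosure_min
  · rintro x (rfl | rfl | rfl)
    · exact inf_le_left.trans inf_le_left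
    · exact inf_le_left.trans inf_le_right
    · exact inf_le_right
  · exact ⟨fun x hx y _ => hx.trans le_sup_left, fun x hx y hy => le_inf hx hy⟩

end aux

theorem stmt_3 {L : Type*} [Lattice L] (a₀ a₁ a₂ : L)
    (hthree : ({a₀, a₁, a₂} : Set L).ncard = 3)
    (hgen : GeneratesLat ({a₀, a₁, a₂} : Set L))
    (hnocoatom : ∀ x : L, ¬ IsCoatomOf x) :
    ∃ x : L, IsAtomOf x := by
  set T : L := a₀ ⊔ a₁ ⊔ a₂ with hT
  set B : L := a₀ ⊓ a₁ ⊓ a₂ with hB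
  have hmem : ∀ x : L, x ∈ latticeClosure ({a₀, a₁, a₂} : Set L) := by
    intro x; rw [hgen]; trivial
  have hset1 : ({a₀, a₂, a₁} : Set L) = {a₀, a₁, a₂} := by
    ext x; simp; tauto
  have hset2 : ({a₁, a₂, a₀} : Set L) = {a₀, a₁, a₂} := by
    ext x; simp; tauto
  have htop : ∀ x : L, x ≤ T := fun x => auxTop a₀ a₁ a₂ (hmem x)
  have hbot : ∀ x : L, B ≤ x := fun x => auxBot a₀ a₁ a₂ (hmem x)
  -- splitting lemmas for each pair
  have hQ01 : ∀ x : L, x ≤ a₀ ⊔ a₁ ∨ a₂ ≤ x := fun x => auxQ a₀ a₁ a₂ (hmem x)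
  have hQ02 : ∀ x : L, x ≤ a₀ ⊔ a₂ ∨ a₁ ≤ x := fun x => auxQ a₀ a₂ a₁ (by rw [hset1]; exact hmem x)
  have hQ12 : ∀ x : L, x ≤ a₁ ⊔ a₂ ∨ a₀ ≤ x := fun x => auxQ a₁ a₂ a₀ (by rw [hset2]; exact hmem x)
  have hQ01' : ∀ x : L, a₀ ⊓ a₁ ≤ x ∨ x ≤ a₂ := fun x => auxQ' a₀ a₁ a₂ (hmem x)
  have hQ02' : ∀ x : L, a₀ ⊓ a₂ ≤ x ∨ x ≤ a₁ := fun x => auxQ' a₀ a₂ a₁ (by rw [hset1]; exact hmem x)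
  have hQ12' : ∀ x : L, a₁ ⊓ a₂ ≤ x ∨ x ≤ a₀ := fun x => auxQ' a₁ a₂ a₀ (by rw [hset2]; exact hmem x)
  -- if some pairwise meet is ≠ B, it is an atom
  have hatom : ∀ u v w : L, (∀ x : L, u ⊓ v ≤ x ∨ x ≤ w) → u ⊓ v ⊓ w = B → u ⊓ v ≠ B →
      ∃ x : L, IsAtomOf x := by
    intro u v w hQ hWB hne
    refine ⟨u ⊓ v, B, u ⊓ v, fun h => hne h.symm, ?_⟩
    ext x
    simp only [Set.mem_Iic, Set.mem_insert_iff, Set.mem_singleton_iff]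
    constructor
    · intro hx
      rcases hQ x with h | h
      · exact Or.inr (le_antisymm hx h)
      · exact Or.inl (le_antisymm (hWB ▸ le_inf hx h) (hbot x))
    · rintro (rfl | rfl)
      · exact hbot _
      · exact le_rfl
  by_cases h01 : a₀ ⊓ a₁ = B
  · by_cases h02 : a₀ ⊓ a₂ = B
    · by_cases h12 : a₁ ⊓ a₂ = B
      · -- all pairwise meets are B; derive a coatom, contradiction
        exfalso
        -- if some pairwise join ≠ T, it's a coatom
        have hcoatom : ∀ u v w : L, (∀ x : L, x ≤ u ⊔ v ∨ w ≤ x) → u ⊔ v ⊔ w = T →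
            u ⊔ v ≠ T → False := by
          intro u v w hQ hWT hne
          refine hnocoatom (u ⊔ v) ⟨u ⊔ v, T, hne, ?_⟩
          ext x
          simp only [Set.mem_Ici, Set.mem_insert_iff, Set.mem_singleton_iff]
          constructor
          · intro hx
            rcases hQ x with h | h
            · exact Or.inl (le_antisymm h hx)
            · exact Or.inr (le_antisymm (htop x) (hWT ▸ sup_le hx h))
          · rintro (rfl | rfl)
            · exact le_rfl
            · exact htop _
        by_cases j01 : a₀ ⊔ a₁ = T
        · by_cases j02 : a₀ ⊔ a₂ = T
          · by_cases j12 : a₁ ⊔ a₂ = T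
            · -- L ⊆ {B, a₀, a₁, a₂, T}, finite, so there is a coatom
              have hsub : (Set.univ : Set L) ⊆ {B, a₀, a₁, a₂, T} := by
                rw [← hgen]
                apply latticeClosure_min
                · rintro x (rfl | rfl | rfl) <;> simp
                · have key : ∀ x y : L, x ∈ ({B, a₀, a₁, a₂, T} : Set L) →
                      y ∈ ({B, a₀, a₁, a₂, T} : Set L) →
                      x ⊔ y ∈ ({B, a₀, a₁, a₂, T} : Set L) ∧
                      x ⊓ y ∈ ({B, a₀, a₁, a₂, T} : Set L) := by
                    have hbT : ∀ z : L, B ⊔ z = z := fun z => sup_eq_right.2 (hbot z)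
                    have hzB : ∀ z : L, B ⊓ z = B := fun z => inf_eq_left.2 (hbot z)
                    have hTz : ∀ z : L, T ⊔ z = T := fun z => sup_eq_left.2 (htop z)
                    have hTz' : ∀ z : L, T ⊓ z = z := fun z => inf_eq_right.2 (htop z)
                    have j10 : a₁ ⊔ a₀ = T := by rw [← j01]; exact sup_comm _ _
                    have j20 : a₂ ⊔ a₀ = T := by rw [← j02]; exact sup_comm _ _
                    have j21 : a₂ ⊔ a₁ = T := by rw [← j12]; exact sup_comm _ _
                    have h10 : a₁ ⊓ a₀ = B := by rw [← h01]; exact inf_comm _ _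
                    have h20 : a₂ ⊓ a₀ = B := by rw [← h02]; exact inf_comm _ _
                    have h21 : a₂ ⊓ a₁ = B := by rw [← h12]; exact inf_comm _ _
                    have hzB' : ∀ z : L, z ⊔ B = z := fun z => sup_eq_left.2 (hbot z)
                    have hzB2 : ∀ z : L, z ⊓ B = B := fun z => inf_eq_right.2 (hbot z)
                    have hzT : ∀ z : L, z ⊔ T = T := fun z => sup_eq_right.2 (htop z)
                    have hzT' : ∀ z : L, z ⊓ T = z := fun z => inf_eq_left.2 (htop z)
                    rintro x y (rfl | rfl | rfl | rfl | rfl) (rfl | rfl | rfl | rfl | rfl) <;>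
                      constructor <;>
                      simp only [hbT, hzB, hTz, hTz', hzB', hzB2, hzT, hzT', sup_idem, inf_idem,
                        j01, j02, j12, j10, j20, j21, h01, h02, h12, h10, h20, h21,
                        Set.mem_insert_iff, Set.mem_singleton_iff] <;>
                      tauto
                  exact ⟨fun x hx y hy => (key x y hx hy).1, fun x hx y hy => (key x y hx hy).2⟩
              have hfin : (Set.univ : Set L).Finite :=
                Set.Finite.subset ((((Set.finite_singleton T).insert a₂).insert a₁).insert
                  a₀ |>.insert B) hsub
              have hBT : B ≠ T := by
                intro h
                have hall : ∀ x y : L, x = y := fun x y =>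
                  le_antisymm ((htop x).trans (h ▸ hbot y)) ((htop y).trans (h ▸ hbot x))
                have : ({a₀, a₁, a₂} : Set L) = {a₀} := by
                  ext x
                  simp [hall x a₀]
                rw [this, Set.ncard_singleton] at hthree
                omega
              obtain ⟨m, hm, hmax⟩ := Set.Finite.exists_maximalFor id {x : L | x ≠ T}
                (hfin.subset (Set.subset_univ _)) ⟨B, hBT⟩
              refine hnocoatom m ⟨m, T, hm, ?_⟩
              ext x
              simp only [Set.mem_Ici, Set.mem_insert_iff, Set.mem_singleton_iff]
              constructor
              · intro hx
                by_cases hxT : x = T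
                · exact Or.inr hxT
                · exact Or.inl (le_antisymm (hmax hxT hx) hx)
              · rintro (rfl | rfl)
                · exact le_rfl
                · exact htop _
            · exact hcoatom a₁ a₂ a₀ hQ12 (by rw [hT]; ac_rfl) j12
          · exact hcoatom a₀ a₂ a₁ hQ02 (by rw [hT]; ac_rfl) j02
        · exact hcoatom a₀ a₁ a₂ hQ01 rfl j01
      · exact hatom a₁ a₂ a₀ hQ12' (by rw [hB]; ac_rfl) h12
    · exact hatom a₀ a₂ a₁ hQ02' (by rw [hB]; ac_rfl) h02
  · exact hatom a₀ a₁ a₂ hQ01' rfl h01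
end

section
/- Let L be a lattice generated by a three-element subset {a₀, a₁, a₂}, and let k be the number of pairs (i,j) with (i,j) ∈ {(0,1), (0,2), (1,2)} such that aᵢ ∧ aⱼ ≠ a₀ ∧ a₁ ∧ a₂. If k ∈ {2, 3}, then L has exactly k atoms. -/
section Aux

variable {L : Type*} [Lattice L] {a : Fin 3 → L}

/-- Induction principle for a lattice generated by the range of `a`. -/
lemma gen_ind (hgen : GeneratesLat (Set.range a)) (P : L → Prop)
    (hg : ∀ i, P (a i)) (hsup : ∀ u v, P u → P v → P (u ⊔ v))
    (hinf : ∀ u v, P u → P v → P (u ⊓ v)) (x : L) : P x := by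
  have h1 : latticeClosure (Set.range a) ⊆ {z | P z} :=
    latticeClosure_min (by rintro _ ⟨i, rfl⟩; exact hg i)
      ⟨fun u hu v hv => hsup u v hu hv, fun u hu v hv => hinf u v hu hv⟩
  have hx : x ∈ latticeClosure (Set.range a) := by
    rw [hgen]; trivial
  exact h1 hx

/-- The meet of the three generators is the minimum of the lattice. -/
lemma m_min (hgen : GeneratesLat (Set.range a)) (x : L) : a 0 ⊓ a 1 ⊓ a 2 ≤ x := by
  refine gen_ind hgen _ ?_ ?_ ?_ x
  · intro i; fin_cases i
    · exact inf_le_left.trans inf_le_left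
    · exact inf_le_left.trans inf_le_right
    · exact inf_le_right
  · intro u v hu _; exact hu.trans le_sup_left
  · intro u v hu hv; exact le_inf hu hv

/-- Dichotomy: every element is above `a i ⊓ a j` or below `a l`. -/
lemma dich (hgen : GeneratesLat (Set.range a)) (i j l : Fin 3)
    (hg : ∀ t, a i ⊓ a j ≤ a t ∨ a t ≤ a l) (x : L) :
    a i ⊓ a j ≤ x ∨ x ≤ a l := by
  refine gen_ind hgen (fun x => a i ⊓ a j ≤ x ∨ x ≤ a l) hg ?_ ?_ x
  · rintro u v (hu | hu) hv
    · exact Or.inl (hu.trans le_sup_left)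
    · rcases hv with hv | hv
      · exact Or.inl (hv.trans le_sup_right)
      · exact Or.inr (sup_le hu hv)
  · rintro u v (hu | hu) hv
    · rcases hv with hv | hv
      · exact Or.inl (le_inf hu hv)
      · exact Or.inr (inf_le_right.trans hv)
    · exact Or.inr (inf_le_left.trans hu)

end Aux

theorem stmt_4 {L : Type*} [Lattice L] (a : Fin 3 → L)
    (hthree : (Set.range a).ncard = 3)
    (hgen : GeneratesLat (Set.range a))
    (k : ℕ)
    (hk : k = {p : Fin 3 × Fin 3 |
        p ∈ ({(0, 1), (0, 2), (1, 2)} : Set (Fin 3 × Fin 3)) ∧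
        a p.1 ⊓ a p.2 ≠ a 0 ⊓ a 1 ⊓ a 2}.ncard)
    (hk23 : k = 2 ∨ k = 3) :
    {x : L | IsAtomOf x}.ncard = k := by
  set m : L := a 0 ⊓ a 1 ⊓ a 2 with hm_def
  -- the three dichotomies
  have d01 : ∀ x : L, a 0 ⊓ a 1 ≤ x ∨ x ≤ a 2 := by
    refine dich hgen 0 1 2 ?_
    intro t; fin_cases t
    · exact Or.inl inf_le_left
    · exact Or.inl inf_le_right
    · exact Or.inr le_rfl
  have d02 : ∀ x : L, a 0 ⊓ a 2 ≤ x ∨ x ≤ a 1 := by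
    refine dich hgen 0 2 1 ?_
    intro t; fin_cases t
    · exact Or.inl inf_le_left
    · exact Or.inr le_rfl
    · exact Or.inl inf_le_right
  have d12 : ∀ x : L, a 1 ⊓ a 2 ≤ x ∨ x ≤ a 0 := by
    refine dich hgen 1 2 0 ?_
    intro t; fin_cases t
    · exact Or.inr le_rfl
    · exact Or.inl inf_le_left
    · exact Or.inl inf_le_right
  have le_m : ∀ x : L, x ≤ a 0 → x ≤ a 1 → x ≤ a 2 → x = m :=
    fun x h0 h1 h2 => le_antisymm (le_inf (le_inf h0 h1) h2) (m_min hgen x)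
  -- everything below a pairwise meet is the meet or the minimum
  have below01 : ∀ z : L, z ≤ a 0 ⊓ a 1 → z = m ∨ z = a 0 ⊓ a 1 := by
    intro z hz
    rcases d01 z with h | h
    · exact Or.inr (le_antisymm hz h)
    · exact Or.inl (le_m z (hz.trans inf_le_left) (hz.trans inf_le_right) h)
  have below02 : ∀ z : L, z ≤ a 0 ⊓ a 2 → z = m ∨ z = a 0 ⊓ a 2 := by
    intro z hz
    rcases d02 z with h | h
    · exact Or.inr (le_antisymm hz h)
    · exact Or.inl (le_m z (hz.trans inf_le_left) h (hz.trans inf_le_right))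
  have below12 : ∀ z : L, z ≤ a 1 ⊓ a 2 → z = m ∨ z = a 1 ⊓ a 2 := by
    intro z hz
    rcases d12 z with h | h
    · exact Or.inr (le_antisymm hz h)
    · exact Or.inl (le_m z h (hz.trans inf_le_left) (hz.trans inf_le_right))
  -- structure of atoms
  have atomAbove : ∀ w : L, IsAtomOf w → w ≠ m ∧ ∀ z, z ≤ w → z = m ∨ z = w := by
    rintro w ⟨x, y, hxy, hIic⟩
    have hx_le : x ≤ w := by
      have : x ∈ Set.Iic w := by rw [hIic]; exact Set.mem_insert _ _
      exact this
    have hy_le : y ≤ w := by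
      have : y ∈ Set.Iic w := by rw [hIic]; exact Set.mem_insert_iff.mpr (Or.inr rfl)
      exact this
    have hw : w = x ∨ w = y := by
      have : w ∈ Set.Iic w := le_rfl
      rw [hIic] at this; simpa using this
    have hm' : m = x ∨ m = y := by
      have : m ∈ Set.Iic w := m_min hgen w
      rw [hIic] at this; simpa using this
    have hwm : w ≠ m := by
      intro h
      apply hxy
      have hx2 : x = m := le_antisymm (h ▸ hx_le) (m_min hgen x)
      have hy2 : y = m := le_antisymm (h ▸ hy_le) (m_min hgen y)
      rw [hx2, hy2]
    refine ⟨hwm, ?_⟩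
    intro z hz
    have hz' : z = x ∨ z = y := by
      have : z ∈ Set.Iic w := hz
      rw [hIic] at this; simpa using this
    rcases hw with hwx | hwy <;> rcases hm' with hmx | hmy
    · exact absurd (hwx.trans hmx.symm) hwm
    · rcases hz' with h | h
      · exact Or.inr (h.trans hwx.symm)
      · exact Or.inl (h.trans hmy.symm)
    · rcases hz' with h | h
      · exact Or.inl (h.trans hmx.symm)
      · exact Or.inr (h.trans hwy.symm)
    · exact absurd (hwy.trans hmy.symm) hwm
  -- the index set
  set S : Set (Fin 3 × Fin 3) := {p : Fin 3 × Fin 3 |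
      p ∈ ({(0, 1), (0, 2), (1, 2)} : Set (Fin 3 × Fin 3)) ∧
      a p.1 ⊓ a p.2 ≠ m} with hS_def
  have hkS : k = S.ncard := hk
  have hSfin : S.Finite := Set.toFinite S
  -- nontrivial pairwise meets are atoms
  have mem_S_atom : ∀ p ∈ S, IsAtomOf (a p.1 ⊓ a p.2) := by
    rintro p ⟨hp1, hp2⟩
    simp only [Set.mem_insert_iff, Set.mem_singleton_iff] at hp1
    have key : ∀ q : L, (∀ z : L, z ≤ q → z = m ∨ z = q) → q ≠ m → IsAtomOf q := by
      intro q hb hq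
      refine ⟨q, m, hq, ?_⟩
      ext z
      simp only [Set.mem_Iic, Set.mem_insert_iff, Set.mem_singleton_iff]
      constructor
      · intro hz; exact (hb z hz).symm
      · rintro (rfl | rfl)
        · exact le_rfl
        · exact m_min hgen q
    rcases hp1 with rfl | rfl | rfl
    · exact key _ below01 hp2
    · exact key _ below02 hp2
    · exact key _ below12 hp2
  -- at least two pairs are in S
  have htwo : ((0,1) ∈ S ∧ (0,2) ∈ S) ∨ ((0,1) ∈ S ∧ (1,2) ∈ S) ∨
      ((0,2) ∈ S ∧ (1,2) ∈ S) := by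
    have h2 : 1 < S.ncard := by
      rcases hk23 with h | h <;> omega
    obtain ⟨p, hp, q, hq, hpq⟩ := (Set.one_lt_ncard hSfin).mp h2
    have hp1 := hp.1
    have hq1 := hq.1
    simp only [Set.mem_insert_iff, Set.mem_singleton_iff] at hp1 hq1
    rcases hp1 with rfl | rfl | rfl <;> rcases hq1 with rfl | rfl | rfl <;>
      first
        | exact absurd rfl hpq
        | tauto
  -- every atom is a nontrivial pairwise meet
  have atoms_sub : ∀ w : L, IsAtomOf w → ∃ p ∈ S, a p.1 ⊓ a p.2 = w := by
    intro w hw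
    obtain ⟨hwm, hlow⟩ := atomAbove w hw
    have use01 : a 0 ⊓ a 1 ≤ w → (0,1) ∈ S → ∃ p ∈ S, a p.1 ⊓ a p.2 = w := by
      intro h hmem
      rcases hlow _ h with h' | h'
      · exact absurd h' hmem.2
      · exact ⟨(0,1), hmem, h'⟩
    have use02 : a 0 ⊓ a 2 ≤ w → (0,2) ∈ S → ∃ p ∈ S, a p.1 ⊓ a p.2 = w := by
      intro h hmem
      rcases hlow _ h with h' | h'
      · exact absurd h' hmem.2
      · exact ⟨(0,2), hmem, h'⟩
    have use12 : a 1 ⊓ a 2 ≤ w → (1,2) ∈ S → ∃ p ∈ S, a p.1 ⊓ a p.2 = w := by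
      intro h hmem
      rcases hlow _ h with h' | h'
      · exact absurd h' hmem.2
      · exact ⟨(1,2), hmem, h'⟩
    have mem12 : a 1 ⊓ a 2 ≠ m → (1,2) ∈ S := by
      intro h; exact ⟨by simp, h⟩
    have mem02 : a 0 ⊓ a 2 ≠ m → (0,2) ∈ S := by
      intro h; exact ⟨by simp, h⟩
    have mem01 : a 0 ⊓ a 1 ≠ m → (0,1) ∈ S := by
      intro h; exact ⟨by simp, h⟩
    rcases htwo with ⟨h01, h02⟩ | ⟨h01, h12⟩ | ⟨h02, h12⟩
    · rcases d01 w with h | hw2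
      · exact use01 h h01
      · rcases d02 w with h | hw1
        · exact use02 h h02
        · rcases below12 w (le_inf hw1 hw2) with h | h
          · exact absurd h hwm
          · refine ⟨(1,2), mem12 ?_, h.symm⟩
            rw [← h]; exact hwm
    · rcases d01 w with h | hw2
      · exact use01 h h01
      · rcases d12 w with h | hw0
        · exact use12 h h12
        · rcases below02 w (le_inf hw0 hw2) with h | h
          · exact absurd h hwm
          · refine ⟨(0,2), mem02 ?_, h.symm⟩
            rw [← h]; exact hwm
    · rcases d02 w with h | hw1
      · exact use02 h h02
      · rcases d12 w with h | hw0
        · exact use12 h h12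
        · rcases below01 w (le_inf hw0 hw1) with h | h
          · exact absurd h hwm
          · refine ⟨(0,1), mem01 ?_, h.symm⟩
            rw [← h]; exact hwm
  -- the atom set is the image of S
  have hset : {x : L | IsAtomOf x} = (fun p : Fin 3 × Fin 3 => a p.1 ⊓ a p.2) '' S := by
    ext w
    simp only [Set.mem_setOf_eq, Set.mem_image]
    constructor
    · intro hw
      obtain ⟨p, hp, hpe⟩ := atoms_sub w hw
      exact ⟨p, hp, hpe⟩
    · rintro ⟨p, hp, rfl⟩
      exact mem_S_atom p hp
  -- injectivity on S
  have hinj : Set.InjOn (fun p : Fin 3 × Fin 3 => a p.1 ⊓ a p.2) S := by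
    rintro p ⟨hp1, hp2⟩ q ⟨hq1, hq2⟩ he
    simp only [Set.mem_insert_iff, Set.mem_singleton_iff] at hp1 hq1
    simp only at he
    rcases hp1 with rfl | rfl | rfl <;> rcases hq1 with rfl | rfl | rfl
    · rfl
    · exact absurd (le_m _ inf_le_left inf_le_right (by rw [he]; exact inf_le_right)) hp2
    · exact absurd (le_m _ inf_le_left inf_le_right (by rw [he]; exact inf_le_right)) hp2
    · exact absurd (le_m _ inf_le_left (by rw [he]; exact inf_le_right) inf_le_right) hp2
    · rfl
    · exact absurd (le_m _ inf_le_left (by rw [he]; exact inf_le_left) inf_le_right) hp2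
    · exact absurd (le_m _ (by rw [he]; exact inf_le_left) inf_le_left inf_le_right) hp2
    · exact absurd (le_m _ (by rw [he]; exact inf_le_left) inf_le_left inf_le_right) hp2
    · rfl
  rw [hset, Set.ncard_image_of_injOn hinj]
  exact hkS.symm
end

section
/- Let L be a lattice generated by a three-element subset {a₁, a₂, a₃}, and let {i, j, k} = {1, 2, 3}. If aᵢ ∧ aⱼ ≠ a₁ ∧ a₂ ∧ a₃ (equivalently, aᵢ ∧ aⱼ ≰ aₖ), then L is the disjoint union of the principal filter ↑(aᵢ ∧ aⱼ) and the principal ideal ↓aₖ. -/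
theorem stmt_6 {L : Type*} [Lattice L] (a : Fin 3 → L)
    (hthree : (Set.range a).ncard = 3)
    (hgen : GeneratesLat (Set.range a))
    (i j k : Fin 3) (hijk : ({i, j, k} : Set (Fin 3)) = Set.univ)
    (hne : a i ⊓ a j ≠ a 0 ⊓ a 1 ⊓ a 2) :
    Set.Ici (a i ⊓ a j) ∪ Set.Iic (a k) = Set.univ ∧
      Disjoint (Set.Ici (a i ⊓ a j)) (Set.Iic (a k)) := by
  set m := a i ⊓ a j with hm
  have hmeet : m ⊓ a k = a 0 ⊓ a 1 ⊓ a 2 := by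
    rw [hm]
    fin_cases i <;> fin_cases j <;> fin_cases k <;>
      simp_all [Set.eq_univ_iff_forall] <;>
      first
        | (exact absurd (hijk 0) (by decide))
        | (exact absurd (hijk 1) (by decide))
        | (exact absurd (hijk 2) (by decide))
        | (simp only [inf_comm, inf_assoc, inf_left_comm]
           try rfl
           try exact inf_left_comm _ _ _)
  have hnle : ¬ m ≤ a k := fun h => hne (by rw [← hmeet, inf_eq_left.2 h])
  constructor
  · have hsub : IsSublattice (Set.Ici m ∪ Set.Iic (a k)) := by
      constructor
      · rintro x (hx | hx) y (hy | hy)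
        · exact Or.inl (le_trans hx le_sup_left)
        · exact Or.inl (le_trans hx le_sup_left)
        · exact Or.inl (le_trans hy le_sup_right)
        · exact Or.inr (sup_le hx hy)
      · rintro x (hx | hx) y (hy | hy)
        · exact Or.inl (le_inf hx hy)
        · exact Or.inr (le_trans inf_le_right hy)
        · exact Or.inr (le_trans inf_le_left hx)
        · exact Or.inr (le_trans inf_le_left hx)
    have hGsub : Set.range a ⊆ Set.Ici m ∪ Set.Iic (a k) := by
      rintro x ⟨n, rfl⟩
      have : n ∈ ({i, j, k} : Set (Fin 3)) := hijk ▸ Set.mem_univ n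
      rcases this with h | h | h
      · exact Or.inl (h ▸ inf_le_left)
      · exact Or.inl (h ▸ inf_le_right)
      · exact Or.inr (h ▸ le_refl _)
    have := latticeClosure_min hGsub hsub
    rw [hgen] at this
    exact Set.eq_univ_of_univ_subset this
  · rw [Set.disjoint_left]
    rintro x hx hx'
    exact hnle (le_trans hx hx')
end

section
/- Let L be a lattice generated by a three-element subset {a₁, a₂, a₃}, and let {i, j, k} = {1, 2, 3}. If aᵢ ∧ aⱼ ≠ a₁ ∧ a₂ ∧ a₃, then aᵢ ∧ aⱼ is an atom of L; that is, the only element of L strictly below aᵢ ∧ aⱼ is a₁ ∧ a₂ ∧ a₃. -/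
theorem stmt_7 {L : Type*} [Lattice L] (a : Fin 3 → L)
    (hthree : (Set.range a).ncard = 3)
    (hgen : GeneratesLat (Set.range a))
    (i j k : Fin 3) (hijk : ({i, j, k} : Set (Fin 3)) = Set.univ)
    (hne : a i ⊓ a j ≠ a 0 ⊓ a 1 ⊓ a 2) :
    IsAtomOf (a i ⊓ a j) ∧
      ∀ x : L, x < a i ⊓ a j → x = a 0 ⊓ a 1 ⊓ a 2 := by
  set m : L := a 0 ⊓ a 1 ⊓ a 2 with hm
  set p : L := a i ⊓ a j with hp
  have hmem : ∀ t : Fin 3, t = i ∨ t = j ∨ t = k := by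
    intro t
    have : t ∈ ({i, j, k} : Set (Fin 3)) := hijk ▸ Set.mem_univ t
    simpa using this
  -- m is below every generator
  have hmle : ∀ t : Fin 3, m ≤ a t := by
    intro t
    fin_cases t
    · exact inf_le_left.trans inf_le_left
    · exact inf_le_left.trans inf_le_right
    · exact inf_le_right
  -- p ⊓ a k ≤ m
  have hijkle : ∀ t : Fin 3, p ⊓ a k ≤ a t := by
    intro t
    rcases hmem t with rfl | rfl | rfl
    · exact inf_le_left.trans inf_le_left
    · exact inf_le_left.trans inf_le_right
    · exact inf_le_right
  have hpk : p ⊓ a k ≤ m :=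
    le_inf (le_inf (hijkle 0) (hijkle 1)) (hijkle 2)
  -- m is the bottom element of L
  have hbot : ∀ x : L, m ≤ x := by
    intro x
    have hx : x ∈ latticeClosure (Set.range a) := by rw [hgen]; trivial
    have hsub : latticeClosure (Set.range a) ⊆ {y : L | m ≤ y} := by
      apply latticeClosure_min
      · rintro _ ⟨t, rfl⟩; exact hmle t
      · constructor
        · intro u hu v _; exact le_sup_of_le_left hu
        · intro u hu v hv; exact le_inf hu hv
    exact hsub hx
  -- the key dichotomy: every element is above p or below a k
  have hkey : ∀ x : L, p ≤ x ∨ x ≤ a k := by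
    intro x
    have hx : x ∈ latticeClosure (Set.range a) := by rw [hgen]; trivial
    have hsub : latticeClosure (Set.range a) ⊆ {y : L | p ≤ y ∨ y ≤ a k} := by
      apply latticeClosure_min
      · rintro _ ⟨t, rfl⟩
        rcases hmem t with rfl | rfl | rfl
        · exact Or.inl inf_le_left
        · exact Or.inl inf_le_right
        · exact Or.inr le_rfl
      · constructor
        · rintro u (hu | hu) v hv
          · exact Or.inl (hu.trans le_sup_left)
          · rcases hv with hv | hv
            · exact Or.inl (hv.trans le_sup_right)
            · exact Or.inr (sup_le hu hv)
        · rintro u hu v hv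
          rcases hu with hu | hu
          · rcases hv with hv | hv
            · exact Or.inl (le_inf hu hv)
            · exact Or.inr (inf_le_right.trans hv)
          · exact Or.inr (inf_le_left.trans hu)
    exact hsub hx
  have hlt : ∀ x : L, x < p → x = m := by
    intro x hx
    rcases hkey x with h | h
    · exact absurd h hx.not_ge
    · exact le_antisymm ((le_inf hx.le h).trans hpk) (hbot x)
  refine ⟨⟨p, m, hne, ?_⟩, hlt⟩
  ext x
  simp only [Set.mem_Iic, Set.mem_insert_iff, Set.mem_singleton_iff]
  constructor
  · intro hxp
    rcases eq_or_lt_of_le hxp with h | h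
    · exact Or.inl h
    · exact Or.inr (hlt x h)
  · rintro (rfl | rfl)
    · exact le_rfl
    · exact hbot p
end

section
/- Let L be a lattice generated by a three-element subset {a₁, a₂, a₃}, and let {i, j, k} = {1, 2, 3}. If aᵢ ∨ aⱼ ≠ a₁ ∨ a₂ ∨ a₃, then L is the disjoint union of the principal ideal ↓(aᵢ ∨ aⱼ) and the principal filter ↑aₖ, and aᵢ ∨ aⱼ is a coatom of L. -/
theorem stmt_8 {L : Type*} [Lattice L] (a : Fin 3 → L)
    (hthree : (Set.range a).ncard = 3)
    (hgen : GeneratesLat (Set.range a))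
    (i j k : Fin 3) (hijk : ({i, j, k} : Set (Fin 3)) = Set.univ)
    (hne : a i ⊔ a j ≠ a 0 ⊔ a 1 ⊔ a 2) :
    Set.Iic (a i ⊔ a j) ∪ Set.Ici (a k) = Set.univ ∧
      Disjoint (Set.Iic (a i ⊔ a j)) (Set.Ici (a k)) ∧
      IsCoatomOf (a i ⊔ a j) := by
  set m := a i ⊔ a j with hm
  set T := a 0 ⊔ a 1 ⊔ a 2 with hT
  -- every generator index is i, j or k
  have hmem : ∀ t : Fin 3, t = i ∨ t = j ∨ t = k := by
    intro t
    have : t ∈ ({i, j, k} : Set (Fin 3)) := by rw [hijk]; trivial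
    simpa using this
  have hleT : ∀ t : Fin 3, a t ≤ T := by
    intro t
    fin_cases t
    · exact le_sup_of_le_left le_sup_left
    · exact le_sup_of_le_left le_sup_right
    · exact le_sup_right
  have hle2 : ∀ t : Fin 3, a t ≤ m ⊔ a k := by
    intro t
    rcases hmem t with h | h | h <;> rw [h]
    · exact le_sup_of_le_left le_sup_left
    · exact le_sup_of_le_left le_sup_right
    · exact le_sup_right
  have hTle : T = m ⊔ a k :=
    le_antisymm (sup_le (sup_le (hle2 0) (hle2 1)) (hle2 2))
      (sup_le (sup_le (hleT i) (hleT j)) (hleT k))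
  -- the union is a sublattice containing the generators
  set S := Set.Iic m ∪ Set.Ici (a k) with hS
  have hsub : IsSublattice S := by
    constructor
    · rintro x (hx | hx) y (hy | hy)
      · exact Or.inl (sup_le hx hy)
      · exact Or.inr (hy.trans le_sup_right)
      · exact Or.inr (hx.trans le_sup_left)
      · exact Or.inr (hx.trans le_sup_left)
    · rintro x (hx | hx) y (hy | hy)
      · exact Or.inl ((inf_le_left).trans hx)
      · exact Or.inl ((inf_le_left).trans hx)
      · exact Or.inl ((inf_le_right).trans hy)
      · exact Or.inr (le_inf hx hy)
  have hgsub : Set.range a ⊆ S := by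
    rintro _ ⟨t, rfl⟩
    rcases hmem t with h | h | h <;> subst h
    · exact Or.inl le_sup_left
    · exact Or.inl le_sup_right
    · exact Or.inr le_rfl
  have hSuniv : S = Set.univ := by
    apply Set.eq_univ_of_univ_subset
    rw [← hgen]
    exact latticeClosure_min hgsub hsub
  -- T is the top
  have hTop : ∀ x : L, x ≤ T := by
    have hsub' : IsSublattice (Set.Iic T) := by
      constructor
      · intro x hx y hy; exact sup_le hx hy
      · intro x hx y _; exact inf_le_left.trans hx
    have hgsub' : Set.range a ⊆ Set.Iic T := by
      rintro _ ⟨t, rfl⟩; exact hleT t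
    intro x
    have : x ∈ latticeClosure (Set.range a) := by rw [hgen]; trivial
    exact latticeClosure_min hgsub' hsub' this
  have hdisj : Disjoint (Set.Iic m) (Set.Ici (a k)) := by
    rw [Set.disjoint_left]
    intro x hx hx'
    exact hne (le_antisymm (sup_le (hleT i) (hleT j))
      (by rw [hTle]; exact sup_le le_rfl (hx'.trans hx)))
  refine ⟨hSuniv, hdisj, ?_⟩
  refine ⟨m, T, hne, ?_⟩
  ext x
  simp only [Set.mem_Ici, Set.mem_insert_iff, Set.mem_singleton_iff]
  constructor
  · intro hx
    have : x ∈ S := by rw [hSuniv]; trivial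
    rcases this with h | h
    · exact Or.inl (le_antisymm h hx)
    · refine Or.inr (le_antisymm (hTop x) ?_)
      rw [hTle]; exact sup_le hx h
  · rintro (rfl | rfl)
    · exact le_rfl
    · rw [hTle]; exact le_sup_left
end

section
/- Let M be a lattice generated by a finite set {a₁, …, aₙ}, and let U = (uᵢⱼ) be an n-by-m matrix of elements of {a₁, …, aₙ} such that every column of U contains every element of {a₁, …, aₙ}, i.e., for every j ∈ {1, …, m}, {u₁ⱼ, …, uₙⱼ} = {a₁, …, aₙ}. For i ∈ {1, …, n}, let u⃗ᵢ = (u_{i1}, …, u_{im}) denote the i-th row of U, regarded as an element of the direct power Mᵐ. Let L be the sublattice of Mᵐ generated by {u⃗₁, …, u⃗ₙ}, and let x⃗ = (x₁, …, xₘ) be an atom of L. Then for every coordinate i ∈ {1, …, m}: if xᵢ is not the least element of M (i.e., not a₁ ∧ … ∧ aₙ), then xᵢ is an atom of M. -/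
lemma inf'_range_eq {M : Type*} [Lattice M] {n : ℕ} (ne : (Finset.univ : Finset (Fin n)).Nonempty)
    {f g : Fin n → M} (h : Set.range f = Set.range g) :
    Finset.univ.inf' ne f = Finset.univ.inf' ne g := by
  apply le_antisymm
  · refine Finset.le_inf' _ _ fun k _ => ?_
    obtain ⟨k', hk'⟩ : g k ∈ Set.range f := h ▸ Set.mem_range_self k
    exact hk' ▸ Finset.inf'_le _ (Finset.mem_univ k')
  · refine Finset.le_inf' _ _ fun k _ => ?_
    obtain ⟨k', hk'⟩ : f k ∈ Set.range g := h ▸ Set.mem_range_self k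
    exact hk' ▸ Finset.inf'_le _ (Finset.mem_univ k')

theorem stmt_10 {M : Type*} [Lattice M] {n m : ℕ} (hn : 0 < n)
    (a : Fin n → M)
    (hgen : GeneratesLat (Set.range a))
    (u : Fin n → Fin m → M)
    -- every column of `u` contains every generator:
    (hcol : ∀ j : Fin m, Set.range (fun i : Fin n => u i j) = Set.range a)
    -- `x` is an atom of the sublattice `L` of `Mᵐ` generated by the rows of `u`,
    -- i.e. the principal ideal of `x` within `L` has exactly two elements:
    (x : Fin m → M)
    (hxL : x ∈ latticeClosure (Set.range u))
    (hatom : TwoElem {y : Fin m → M | y ∈ latticeClosure (Set.range u) ∧ y ≤ x}) :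
    ∀ i : Fin m,
      x i ≠ (Finset.univ : Finset (Fin n)).inf' ⟨⟨0, hn⟩, Finset.mem_univ _⟩ a →
      IsAtomOf (x i) := by
  have ne : (Finset.univ : Finset (Fin n)).Nonempty := ⟨⟨0, hn⟩, Finset.mem_univ _⟩
  set Lcl := latticeClosure (Set.range u) with hLcl
  have hsub : IsSublattice Lcl := isSublattice_latticeClosure
  -- Z is the least element of the sublattice L
  set Z : Fin m → M := Finset.univ.inf' ne u with hZ
  have hZmem : Z ∈ Lcl :=
    hsub.2.finsetInf'_mem ne fun i _ => subset_latticeClosure (Set.mem_range_self i)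
  have hZle : ∀ y ∈ Lcl, Z ≤ y := by
    have : Lcl ⊆ Set.Ici Z := by
      refine latticeClosure_min ?_ ?_
      · rintro _ ⟨i0, rfl⟩
        exact Finset.inf'_le u (Finset.mem_univ i0)
      · exact ⟨fun p hp q hq => Set.mem_Ici.2 (le_trans (Set.mem_Ici.1 hp) le_sup_left), fun p hp q hq => Set.mem_Ici.2 (le_inf (Set.mem_Ici.1 hp) (Set.mem_Ici.1 hq))⟩
    exact fun y hy => this hy
  have hZi : ∀ j, Z j = Finset.univ.inf' ne a := by
    intro j
    rw [hZ, Finset.inf'_apply]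
    exact inf'_range_eq ne (hcol j)
  -- dichotomy: every element of L below x is Z or x
  have hdich : ∀ y ∈ Lcl, y ≤ x → y = Z ∨ y = x := by
    obtain ⟨p, q, hpq, hS⟩ := hatom
    have hxS : x ∈ {y : Fin m → M | y ∈ Lcl ∧ y ≤ x} := ⟨hxL, le_refl x⟩
    have hZS : Z ∈ {y : Fin m → M | y ∈ Lcl ∧ y ≤ x} := ⟨hZmem, hZle x hxL⟩
    have hxZ : x ≠ Z := by
      intro hxz
      have hpZ : p = Z := by
        have hp : p ∈ {y : Fin m → M | y ∈ Lcl ∧ y ≤ x} := hS ▸ Set.mem_insert p {q}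
        exact le_antisymm (hxz ▸ hp.2) (hZle p hp.1)
      have hqZ : q = Z := by
        have hq : q ∈ {y : Fin m → M | y ∈ Lcl ∧ y ≤ x} := hS ▸ Set.mem_insert_of_mem p rfl
        exact le_antisymm (hxz ▸ hq.2) (hZle q hq.1)
      exact hpq (hpZ.trans hqZ.symm)
    intro y hy hyx
    have hyS : y ∈ ({p, q} : Set (Fin m → M)) := hS ▸ show y ∈ _ from ⟨hy, hyx⟩
    have hxS' : x ∈ ({p, q} : Set (Fin m → M)) := hS ▸ hxS
    have hZS' : Z ∈ ({p, q} : Set (Fin m → M)) := hS ▸ hZS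
    rcases hxS' with hx1 | hx1 <;> rcases hZS' with hz1 | hz1 <;>
      rcases hyS with hy1 | hy1 <;> simp_all
  -- surjectivity of projection onto each coordinate
  have hsurj : ∀ (i : Fin m) (t : M), ∃ y ∈ Lcl, y i = t := by
    intro i t
    have hT : latticeClosure (Set.range a) ⊆ (fun y : Fin m → M => y i) '' Lcl := by
      refine latticeClosure_min ?_ ?_
      · rintro _ ⟨k, rfl⟩
        obtain ⟨i0, hi0⟩ : a k ∈ Set.range (fun i' : Fin n => u i' i) :=
          (hcol i) ▸ Set.mem_range_self k
        exact ⟨u i0, subset_latticeClosure (Set.mem_range_self i0), hi0⟩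
      constructor
      · rintro _ ⟨y1, hy1, rfl⟩ _ ⟨y2, hy2, rfl⟩
        exact ⟨y1 ⊔ y2, hsub.1 hy1 hy2, rfl⟩
      · rintro _ ⟨y1, hy1, rfl⟩ _ ⟨y2, hy2, rfl⟩
        exact ⟨y1 ⊓ y2, hsub.2 hy1 hy2, rfl⟩
    have ht : t ∈ latticeClosure (Set.range a) := by rw [hgen]; trivial
    exact hT ht
  intro i hne
  refine ⟨Finset.univ.inf' ne a, x i, fun h => hne h.symm, ?_⟩
  ext t
  simp only [Set.mem_Iic, Set.mem_insert_iff, Set.mem_singleton_iff]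
  constructor
  · intro ht
    obtain ⟨y, hy, hyi⟩ := hsurj i t
    have hwmem : y ⊓ x ∈ Lcl := hsub.2 hy hxL
    have hwle : y ⊓ x ≤ x := inf_le_right
    have hwi : (y ⊓ x) i = t := by
      show y i ⊓ x i = t
      rw [hyi, inf_eq_left.2 ht]
    rcases hdich _ hwmem hwle with h | h
    · left; rw [← hwi, h, hZi]
    · right; rw [← hwi, h]
  · rintro (rfl | rfl)
    · rw [← hZi i]
      exact hZle x hxL i
    · exact le_refl _
end

section
/- Every lattice generated by a three-element subset has at least one atom or at least one coatom. -/
/-- If every generator is below `c` or above `a`, then every element of the lattice is. -/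
lemma aux_key {L : Type*} [Lattice L] {G : Set L} (hgen : GeneratesLat G) (a c : L)
    (h : ∀ g ∈ G, g ≤ c ∨ a ≤ g) : ∀ w : L, w ≤ c ∨ a ≤ w := by
  have hsub : IsSublattice {w : L | w ≤ c ∨ a ≤ w} := by
    constructor
    · intro u hu v hv
      rcases hu with hu | hu
      · rcases hv with hv | hv
        · exact Or.inl (sup_le hu hv)
        · exact Or.inr (hv.trans le_sup_right)
      · exact Or.inr (hu.trans le_sup_left)
    · intro u hu v hv
      rcases hu with hu | hu
      · exact Or.inl (inf_le_left.trans hu)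
      · rcases hv with hv | hv
        · exact Or.inl (inf_le_right.trans hv)
        · exact Or.inr (le_inf hu hv)
  have : latticeClosure G ⊆ {w : L | w ≤ c ∨ a ≤ w} := latticeClosure_min h hsub
  intro w
  exact this (by rw [hgen]; trivial)

/-- Everything is above the meet of all generators-analogue: a set of the form `Ici b`
containing the generators contains everything. -/
lemma aux_bot {L : Type*} [Lattice L] {G : Set L} (hgen : GeneratesLat G) (b : L)
    (h : ∀ g ∈ G, b ≤ g) : ∀ w : L, b ≤ w := by
  have hsub : IsSublattice {w : L | b ≤ w} := by
    constructor
    · intro u hu v _; exact hu.trans le_sup_left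
    · intro u hu v hv; exact le_inf hu hv
  have : latticeClosure G ⊆ {w : L | b ≤ w} := latticeClosure_min h hsub
  intro w; exact this (by rw [hgen]; trivial)

lemma aux_top {L : Type*} [Lattice L] {G : Set L} (hgen : GeneratesLat G) (t : L)
    (h : ∀ g ∈ G, g ≤ t) : ∀ w : L, w ≤ t := by
  have hsub : IsSublattice {w : L | w ≤ t} := by
    constructor
    · intro u hu v hv; exact sup_le hu hv
    · intro u hu v _; exact inf_le_left.trans hu
  have : latticeClosure G ⊆ {w : L | w ≤ t} := latticeClosure_min h hsub
  intro w; exact this (by rw [hgen]; trivial)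

/-- If `x ⊓ y` is strictly above the bottom `x ⊓ y ⊓ z`, it is an atom. -/
lemma aux_meet_atom {L : Type*} [Lattice L] {G : Set L} (hgen : GeneratesLat G)
    {x y z : L} (hG : G = {x, y, z}) (hne : x ⊓ y ≠ x ⊓ y ⊓ z) :
    IsAtomOf (x ⊓ y) := by
  have hbot : ∀ w : L, x ⊓ y ⊓ z ≤ w := by
    refine aux_bot hgen _ ?_
    intro g hg
    rw [hG] at hg
    rcases hg with rfl | rfl | rfl
    · exact inf_le_left.trans inf_le_left
    · exact inf_le_left.trans inf_le_right
    · exact inf_le_right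
  have hkey : ∀ w : L, w ≤ z ∨ x ⊓ y ≤ w := by
    refine aux_key hgen (x ⊓ y) z ?_
    intro g hg
    rw [hG] at hg
    rcases hg with rfl | rfl | rfl
    · exact Or.inr inf_le_left
    · exact Or.inr inf_le_right
    · exact Or.inl le_rfl
  refine ⟨x ⊓ y ⊓ z, x ⊓ y, hne.symm, ?_⟩
  ext w
  simp only [Set.mem_Iic, Set.mem_insert_iff, Set.mem_singleton_iff]
  constructor
  · intro hw
    rcases hkey w with hz | hxy
    · exact Or.inl (le_antisymm (le_inf hw hz) (hbot w))
    · exact Or.inr (le_antisymm hw hxy)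
  · rintro (rfl | rfl)
    · exact inf_le_left
    · exact le_rfl

/-- Dual: if `x ⊔ y` is strictly below the top `x ⊔ y ⊔ z`, it is a coatom. -/
lemma aux_join_coatom {L : Type*} [Lattice L] {G : Set L} (hgen : GeneratesLat G)
    {x y z : L} (hG : G = {x, y, z}) (hne : x ⊔ y ≠ x ⊔ y ⊔ z) :
    IsCoatomOf (x ⊔ y) := by
  have htop : ∀ w : L, w ≤ x ⊔ y ⊔ z := by
    refine aux_top hgen _ ?_
    intro g hg
    rw [hG] at hg
    rcases hg with rfl | rfl | rfl
    · exact le_sup_left.trans le_sup_left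
    · exact le_sup_right.trans le_sup_left
    · exact le_sup_right
  have hkey : ∀ w : L, w ≤ x ⊔ y ∨ z ≤ w := by
    refine aux_key hgen z (x ⊔ y) ?_
    intro g hg
    rw [hG] at hg
    rcases hg with rfl | rfl | rfl
    · exact Or.inl le_sup_left
    · exact Or.inl le_sup_right
    · exact Or.inr le_rfl
  refine ⟨x ⊔ y ⊔ z, x ⊔ y, hne.symm, ?_⟩
  ext w
  simp only [Set.mem_Ici, Set.mem_insert_iff, Set.mem_singleton_iff]
  constructor
  · intro hw
    rcases hkey w with hxy | hz
    · exact Or.inr (le_antisymm hxy hw)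
    · exact Or.inl (le_antisymm (htop w) (sup_le hw hz))
  · rintro (rfl | rfl)
    · exact le_sup_left
    · exact le_rfl

theorem stmt_11 {L : Type*} [Lattice L] (G : Set L)
    (hthree : G.ncard = 3) (hgen : GeneratesLat G) :
    (∃ x : L, IsAtomOf x) ∨ (∃ x : L, IsCoatomOf x) := by
  obtain ⟨x, y, z, hxy, hxz, hyz, hG⟩ := Set.ncard_eq_three.mp hthree
  -- If any pairwise meet is strictly above the bottom, it is an atom.
  by_cases hm1 : x ⊓ y ≠ x ⊓ y ⊓ z
  · exact Or.inl ⟨_, aux_meet_atom hgen hG hm1⟩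
  by_cases hm2 : x ⊓ z ≠ x ⊓ z ⊓ y
  · have hG' : G = {x, z, y} := by rw [hG]; ext w; simp; tauto
    exact Or.inl ⟨_, aux_meet_atom hgen hG' hm2⟩
  by_cases hm3 : y ⊓ z ≠ y ⊓ z ⊓ x
  · have hG' : G = {y, z, x} := by rw [hG]; ext w; simp; tauto
    exact Or.inl ⟨_, aux_meet_atom hgen hG' hm3⟩
  by_cases hj1 : x ⊔ y ≠ x ⊔ y ⊔ z
  · exact Or.inr ⟨_, aux_join_coatom hgen hG hj1⟩
  by_cases hj2 : x ⊔ z ≠ x ⊔ z ⊔ y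
  · have hG' : G = {x, z, y} := by rw [hG]; ext w; simp; tauto
    exact Or.inr ⟨_, aux_join_coatom hgen hG' hj2⟩
  by_cases hj3 : y ⊔ z ≠ y ⊔ z ⊔ x
  · have hG' : G = {y, z, x} := by rw [hG]; ext w; simp; tauto
    exact Or.inr ⟨_, aux_join_coatom hgen hG' hj3⟩
  -- Degenerate case: all pairwise meets equal the bottom, all pairwise joins the top.
  push_neg at hm1 hm2 hm3 hj1 hj2 hj3
  set b := x ⊓ y ⊓ z with hb
  set t := x ⊔ y ⊔ z with ht
  have hm2' : x ⊓ z = b := by rw [hm2, hb, inf_right_comm]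
  have hm3' : y ⊓ z = b := by rw [hm3, hb, inf_right_comm, inf_comm y x]
  have hj2' : x ⊔ z = t := by rw [hj2, ht, sup_right_comm]
  have hj3' : y ⊔ z = t := by rw [hj3, ht, sup_right_comm, sup_comm y x]
  have hbx : b ≤ x := inf_le_left.trans inf_le_left
  have hby : b ≤ y := inf_le_left.trans inf_le_right
  have hbz : b ≤ z := inf_le_right
  have hxt : x ≤ t := le_sup_left.trans le_sup_left
  have hyt : y ≤ t := le_sup_right.trans le_sup_left
  have hzt : z ≤ t := le_sup_right
  have hbt : b ≤ t := hbx.trans hxt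
  -- all two-element sups
  have s1 : b ⊔ x = x := sup_eq_right.mpr hbx
  have s2 : b ⊔ y = y := sup_eq_right.mpr hby
  have s3 : b ⊔ z = z := sup_eq_right.mpr hbz
  have s4 : b ⊔ t = t := sup_eq_right.mpr hbt
  have s5 : x ⊔ b = x := sup_eq_left.mpr hbx
  have s6 : y ⊔ b = y := sup_eq_left.mpr hby
  have s7 : z ⊔ b = z := sup_eq_left.mpr hbz
  have s8 : t ⊔ b = t := sup_eq_left.mpr hbt
  have s9 : x ⊔ t = t := sup_eq_right.mpr hxt
  have s10 : y ⊔ t = t := sup_eq_right.mpr hyt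
  have s11 : z ⊔ t = t := sup_eq_right.mpr hzt
  have s12 : t ⊔ x = t := sup_eq_left.mpr hxt
  have s13 : t ⊔ y = t := sup_eq_left.mpr hyt
  have s14 : t ⊔ z = t := sup_eq_left.mpr hzt
  have s15 : y ⊔ x = t := by rw [sup_comm]; exact hj1
  have s16 : z ⊔ x = t := by rw [sup_comm]; exact hj2'
  have s17 : z ⊔ y = t := by rw [sup_comm]; exact hj3'
  -- all two-element infs
  have i1 : b ⊓ x = b := inf_eq_left.mpr hbx
  have i2 : b ⊓ y = b := inf_eq_left.mpr hby
  have i3 : b ⊓ z = b := inf_eq_left.mpr hbz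
  have i4 : b ⊓ t = b := inf_eq_left.mpr hbt
  have i5 : x ⊓ b = b := inf_eq_right.mpr hbx
  have i6 : y ⊓ b = b := inf_eq_right.mpr hby
  have i7 : z ⊓ b = b := inf_eq_right.mpr hbz
  have i8 : t ⊓ b = b := inf_eq_right.mpr hbt
  have i9 : x ⊓ t = x := inf_eq_left.mpr hxt
  have i10 : y ⊓ t = y := inf_eq_left.mpr hyt
  have i11 : z ⊓ t = z := inf_eq_left.mpr hzt
  have i12 : t ⊓ x = x := inf_eq_right.mpr hxt
  have i13 : t ⊓ y = y := inf_eq_right.mpr hyt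
  have i14 : t ⊓ z = z := inf_eq_right.mpr hzt
  have i15 : y ⊓ x = b := by rw [inf_comm]; exact hm1
  have i16 : z ⊓ x = b := by rw [inf_comm]; exact hm2'
  have i17 : z ⊓ y = b := by rw [inf_comm]; exact hm3'
  -- The five-element set is a sublattice, hence is everything.
  have hsub : IsSublattice ({b, x, y, z, t} : Set L) := by
    constructor
    · intro u hu v hv
      simp only [Set.mem_insert_iff, Set.mem_singleton_iff] at hu hv ⊢
      rcases hu with rfl | rfl | rfl | rfl | rfl <;>
        rcases hv with rfl | rfl | rfl | rfl | rfl <;>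
        simp [s1, s2, s3, s4, s5, s6, s7, s8, s9, s10, s11, s12, s13, s14, s15, s16, s17,
          hj1, hj2', hj3']
    · intro u hu v hv
      simp only [Set.mem_insert_iff, Set.mem_singleton_iff] at hu hv ⊢
      rcases hu with rfl | rfl | rfl | rfl | rfl <;>
        rcases hv with rfl | rfl | rfl | rfl | rfl <;>
        simp [i1, i2, i3, i4, i5, i6, i7, i8, i9, i10, i11, i12, i13, i14, i15, i16, i17,
          hm1, hm2', hm3']
  have hall : ∀ w : L, w ∈ ({b, x, y, z, t} : Set L) := by
    intro w
    have hsubset : latticeClosure G ⊆ ({b, x, y, z, t} : Set L) := by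
      refine latticeClosure_min ?_ hsub
      rw [hG]
      intro g hg
      rcases hg with rfl | rfl | rfl <;> simp
    exact hsubset (by rw [hgen]; trivial)
  -- `x` is an atom.
  have hxb : x ≠ b := by
    intro h
    have h1 : x ≤ y := h.le.trans hby
    have h2 : x ≤ z := h.le.trans hbz
    have hy : y = t := (sup_eq_right.mpr h1).symm.trans hj1
    have hz : z = t := (sup_eq_right.mpr h2).symm.trans hj2'
    exact hyz (hy.trans hz.symm)
  have hylex : ¬ y ≤ x := by
    intro h
    have h2 : y = b := (inf_eq_right.mpr h).symm.trans hm1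
    have h3 : y ≤ z := h2.le.trans hbz
    have h4 : z = t := (sup_eq_right.mpr h3).symm.trans hj3'
    have h5 : x ≤ z := hxt.trans h4.ge
    have h6 : x = b := (inf_eq_left.mpr h5).symm.trans hm2'
    exact hxb h6
  have hzlex : ¬ z ≤ x := by
    intro h
    have h2 : z = b := (inf_eq_right.mpr h).symm.trans hm2'
    have h3 : z ≤ y := h2.le.trans hby
    have h4 : y = t := (sup_eq_left.mpr h3).symm.trans hj3'
    have h5 : x ≤ y := hxt.trans h4.ge
    have h6 : x = b := (inf_eq_left.mpr h5).symm.trans hm1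
    exact hxb h6
  have htlex : ¬ t ≤ x := fun h => hylex (hyt.trans h)
  refine Or.inl ⟨x, b, x, fun h => hxb h.symm, ?_⟩
  ext w
  simp only [Set.mem_Iic, Set.mem_insert_iff, Set.mem_singleton_iff]
  constructor
  · intro hw
    have hw5 := hall w
    simp only [Set.mem_insert_iff, Set.mem_singleton_iff] at hw5
    rcases hw5 with h | h | h | h | h
    · exact Or.inl h
    · exact Or.inr h
    · exact absurd (h.symm.trans_le hw) hylex
    · exact absurd (h.symm.trans_le hw) hzlex
    · exact absurd (h.symm.trans_le hw) htlex
  · rintro (rfl | rfl)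
    · exact hbx
    · exact le_rfl
end
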